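/- arXiv:1710.05528 — 2 statements merged into one kernel-verified Lean document; each statement's English description precedes it below -/
import Mathlib

section
/- Let E ⊂ ℝ^{n+1} be an n-ADR set, u harmonic in Ω := ℝ^{n+1}\E, and let 𝒫 ⊂ 𝔻(E) be the collection of principal (stopping) cubes built from an exhausting increasing sequence ℐ and the stopping condition M_𝔻(N_*u)(Q') > 2M_𝔻(N_*u)(Q). Then 𝒫 satisfies a Carleson packing condition: for every Q₀ ∈ 𝔻(E), Σ_{P∈𝒫, P⊆Q₀} σ(P) ≲ σ(Q₀), with implicit constant depending only on the structural constants and the Carleson constant of ℐ. -/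
open MeasureTheory Metric Set
open scoped ENNReal NNReal

attribute [local instance] Classical.propDecidable

noncomputable section

/-- `ℝ^m` with the Euclidean metric. -/
abbrev Euc (m : ℕ) : Type := EuclideanSpace ℝ (Fin m)

/-! ### General dyadic systems in metric spaces (for the discrete Carleson embedding) -/

/-- A dyadic (Christ-type) system of cubes in a (quasi)metric space `X`. -/
structure MetricDyadic (X : Type) [PseudoMetricSpace X] [MeasurableSpace X] where
  ι : Type
  cube : ι → Set X
  gen : ι → ℤ
  cube_meas : ∀ Q, MeasurableSet (cube Q)
  nested : ∀ Q P, cube Q ⊆ cube P ∨ cube P ⊆ cube Q ∨ Disjoint (cube Q) (cube P)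
  covers : ∀ k : ℤ, ∀ x : X, ∃ Q, gen Q = k ∧ x ∈ cube Q
  disj_gen : ∀ Q P, gen Q = gen P → Q ≠ P → Disjoint (cube Q) (cube P)
  center : ι → X
  c1 : ℝ
  C1 : ℝ
  c1_pos : 0 < c1
  C1_ge : 1 ≤ C1
  ball_sub : ∀ Q, ball (center Q) (c1 * (2 : ℝ) ^ (-(gen Q))) ⊆ cube Q
  sub_ball : ∀ Q, cube Q ⊆ ball (center Q) (C1 * (2 : ℝ) ^ (-(gen Q)))

/-- The dyadic maximal function associated to a dyadic system. -/
def mDyad {X : Type} [PseudoMetricSpace X] [MeasurableSpace X] (D : MetricDyadic X)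
    (μ : Measure X) (f : X → ℝ) (x : X) : ℝ≥0∞ :=
  ⨆ Q ∈ {Q : D.ι | x ∈ D.cube Q},
    (μ (D.cube Q))⁻¹ * ∫⁻ y in D.cube Q, ENNReal.ofReal (f y) ∂μ

/-! ### ADR and UR sets -/

variable (n : ℕ) (E : Set (Euc (n + 1)))

/-- The surface measure `σ := H^n|_E`. -/
def sigmaE : Measure (Euc (n + 1)) :=
  (Measure.hausdorffMeasure (n : ℝ)).restrict E

/-- `E ⊆ ℝ^{n+1}` is an `n`-dimensional Ahlfors-David regular set with ADR constant `CA`. -/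
def IsADR (CA : ℝ) : Prop :=
  IsClosed E ∧ E.Nonempty ∧ 1 ≤ CA ∧
    ∀ x ∈ E, ∀ r : ℝ, 0 < r → ENNReal.ofReal r < EMetric.diam E →
      ENNReal.ofReal (r ^ n / CA) ≤ sigmaE n E (ball x r) ∧
        sigmaE n E (ball x r) ≤ ENNReal.ofReal (CA * r ^ n)

/-- `E ⊆ ℝ^{n+1}` is uniformly rectifiable (of codimension 1): it is `n`-ADR and contains
big pieces of Lipschitz images of `ℝ^n`. -/
def IsUR : Prop :=
  (∃ CA : ℝ, IsADR n E CA) ∧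
    ∃ θ Λ : ℝ, 0 < θ ∧ 0 < Λ ∧
      ∀ x ∈ E, ∀ r : ℝ, 0 < r → ENNReal.ofReal r < EMetric.diam E →
        ∃ ρ : Euc n → Euc (n + 1), LipschitzWith (Real.toNNReal Λ) ρ ∧
          ENNReal.ofReal (θ * r ^ n) ≤
            Measure.hausdorffMeasure (n : ℝ)
              (E ∩ ball x r ∩ (ρ '' {y : Euc n | ‖y‖ < r}))

/-! ### Harmonic functions, test vector fields and (local) bounded variation -/

/-- Divergence of a vector field on `ℝ^{n+1}`. -/
def divg (Ψ : Euc (n + 1) → Euc (n + 1)) (Y : Euc (n + 1)) : ℝ :=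
  ∑ i : Fin (n + 1), fderiv ℝ Ψ Y (EuclideanSpace.single i (1 : ℝ)) i

/-- `u` is harmonic on `Ω`: it is `C²` there and its Laplacian vanishes. -/
def HarmonicOnSet (u : Euc (n + 1) → ℝ) (Ω : Set (Euc (n + 1))) : Prop :=
  ContDiffOn ℝ 2 u Ω ∧
    ∀ x ∈ Ω,
      ∑ i : Fin (n + 1),
        fderiv ℝ (fun y => fderiv ℝ u y (EuclideanSpace.single i (1 : ℝ))) x
          (EuclideanSpace.single i (1 : ℝ)) = 0

/-- `Ψ ∈ C¹₀(U)` with `‖Ψ‖_∞ ≤ 1`. -/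
def TestOn (U : Set (Euc (n + 1))) (Ψ : Euc (n + 1) → Euc (n + 1)) : Prop :=
  ContDiff ℝ 1 Ψ ∧ HasCompactSupport Ψ ∧ tsupport Ψ ⊆ U ∧ ∀ Y, ‖Ψ Y‖ ≤ 1

/-- The total variation `∬_U |∇f|` of `f` over `U`, defined by duality. -/
def totalVar (f : Euc (n + 1) → ℝ) (U : Set (Euc (n + 1))) : ℝ≥0∞ :=
  ⨆ Ψ : {Ψ : Euc (n + 1) → Euc (n + 1) // TestOn n U Ψ},
    ENNReal.ofReal (∫ Y in U, f Y * divg n Ψ.1 Y)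

/-- `f ∈ BV_loc(Ω)`. -/
def BVloc (f : Euc (n + 1) → ℝ) (Ω : Set (Euc (n + 1))) : Prop :=
  LocallyIntegrableOn f Ω ∧
    ∀ U : Set (Euc (n + 1)), IsOpen U → Bornology.IsBounded U → closure U ⊆ Ω →
      totalVar n f U < ⊤

/-- The Carleson functional `𝒞(∇f)(x) = sup_{r>0} r^{-n} ∬_{B(x,r)\E} |∇f|`. -/
def carlGrad (f : Euc (n + 1) → ℝ) (x : Euc (n + 1)) : ℝ≥0∞ :=
  ⨆ r : {r : ℝ // 0 < r},
    (ENNReal.ofReal ((r : ℝ) ^ n))⁻¹ * totalVar n f (ball x (r : ℝ) \ E)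

/-! ### `L^p` norms of `ℝ≥0∞`-valued functions and operator norms -/

def lpNormE {X : Type} [MeasurableSpace X] (μ : Measure X) (p : ℝ) (g : X → ℝ≥0∞) : ℝ≥0∞ :=
  (∫⁻ x, g x ^ p ∂μ) ^ (1 / p)

def opNormE {X : Type} [MeasurableSpace X] (μ : Measure X) (p : ℝ)
    (T : (X → ℝ≥0∞) → X → ℝ≥0∞) : ℝ≥0∞ :=
  sInf {c : ℝ≥0∞ | ∀ g : X → ℝ≥0∞, lpNormE μ p (T g) ≤ c * lpNormE μ p g}

/-- The Hardy–Littlewood maximal operator over surface balls of `E`. -/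
def hlMax (g : Euc (n + 1) → ℝ≥0∞) (x : Euc (n + 1)) : ℝ≥0∞ :=
  ⨆ y ∈ E, ⨆ r : {r : ℝ // 0 < r ∧ dist x y < r},
    (sigmaE n E (ball y (r : ℝ)))⁻¹ * ∫⁻ z in ball y (r : ℝ), g z ∂(sigmaE n E)

/-! ### Christ–David dyadic cubes on `E` and the HMM Whitney regions -/

/-- A Christ–David system of dyadic cubes `𝔻(E)` on an ADR set `E`. -/
structure DyadicSystem where
  ι : Type
  cube : ι → Set (Euc (n + 1))
  cube_inj : Function.Injective cube
  cube_sub : ∀ Q, cube Q ⊆ E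
  cube_ne : ∀ Q, (cube Q).Nonempty
  cube_meas : ∀ Q, MeasurableSet (cube Q)
  len : ι → ℝ
  len_dyadic : ∀ Q, ∃ k : ℤ, len Q = (2 : ℝ) ^ (-k)
  center : ι → Euc (n + 1)
  center_mem : ∀ Q, center Q ∈ cube Q
  c1 : ℝ
  C1 : ℝ
  c1_pos : 0 < c1
  C1_ge : 1 ≤ C1
  ball_sub : ∀ Q, E ∩ ball (center Q) (c1 * len Q) ⊆ cube Q
  sub_ball : ∀ Q, cube Q ⊆ ball (center Q) (C1 * len Q)
  nested : ∀ Q P, cube Q ⊆ cube P ∨ cube P ⊆ cube Q ∨ Disjoint (cube Q) (cube P)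
  mono_len : ∀ Q P, cube Q ⊆ cube P → len Q ≤ len P
  parent : ι → ι
  parent_sub : ∀ Q, cube Q ⊆ cube (parent Q)
  parent_len : ∀ Q, len (parent Q) = 2 * len Q ∨ (cube Q = E ∧ parent Q = Q)
  exists_small : ∀ x ∈ E, ∀ r : ℝ, 0 < r → ∃ Q, x ∈ cube Q ∧ len Q ≤ r
  exists_large : ∀ x ∈ E, ∀ r : ℝ, 0 < r → ENNReal.ofReal r ≤ EMetric.diam E →
      ∃ Q, x ∈ cube Q ∧ r ≤ C1 * len Q

/-- The Christ–David cubes of `E` together with the Whitney regions `U_Q`, the fattened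
Whitney regions `Û**_Q` used to build cones, and their connected components, as constructed
by Hofmann–Martell–Mayboroda. -/
structure WhitneySetup extends DyadicSystem n E where
  U : ι → Set (Euc (n + 1))
  U_open : ∀ Q, IsOpen (U Q)
  U_sub : ∀ Q, U Q ⊆ Eᶜ
  Ufat : ι → Set (Euc (n + 1))
  Ufat_open : ∀ Q, IsOpen (Ufat Q)
  Ufat_sub : ∀ Q, Ufat Q ⊆ Eᶜ
  U_sub_fat : ∀ Q, U Q ⊆ Ufat Q
  cw : ℝ
  cw_ge : 1 ≤ cw
  fat_dist_le : ∀ Q, ∀ Y ∈ Ufat Q, infDist Y E ≤ cw * len Q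
  fat_len_le : ∀ Q, ∀ Y ∈ Ufat Q, len Q ≤ cw * infDist Y E
  fat_near : ∀ Q, ∀ Y ∈ Ufat Q, infDist Y (cube Q) ≤ cw * len Q
  ncomp : ι → ℕ
  ncomp_pos : ∀ Q, 0 < ncomp Q
  ncomp_bdd : ∃ N : ℕ, ∀ Q, ncomp Q ≤ N
  comp : ι → ℕ → Set (Euc (n + 1))
  comp_union : ∀ Q, U Q = ⋃ i ∈ Finset.range (ncomp Q), comp Q i
  comp_empty : ∀ Q, ∀ i, ncomp Q ≤ i → comp Q i = ∅
  comp_disj : ∀ Q, ∀ i j, i ≠ j → Disjoint (comp Q i) (comp Q j)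
  comp_open : ∀ Q, ∀ i, IsOpen (comp Q i)
  comp_conn : ∀ Q, ∀ i, i < ncomp Q → IsConnected (comp Q i)
  vol_comp : ∀ Q, ∀ i j, i < ncomp Q → j < ncomp Q →
      volume (comp Q i) ≤ ENNReal.ofReal cw * volume (comp Q j)
  vol_U : ∀ Q, ENNReal.ofReal (len Q ^ (n + 1) / cw) ≤ volume (U Q) ∧
      volume (U Q) ≤ ENNReal.ofReal (cw * len Q ^ (n + 1))
  z0 : Euc (n + 1)
  z0_mem : z0 ∈ E
  lam0 : ℕ

/-! ### Cones, non-tangential maximal functions, dyadic maximal functions -/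

/-- The cone `Γ(x) := ⋃_{Q ∋ x} Û**_Q`. -/
def coneW (W : WhitneySetup n E) (x : Euc (n + 1)) : Set (Euc (n + 1)) :=
  ⋃ Q ∈ {Q : W.ι | x ∈ W.cube Q}, W.Ufat Q

/-- The non-tangential maximal function `N_* u`. -/
def ntMax (W : WhitneySetup n E) (u : Euc (n + 1) → ℝ) (x : Euc (n + 1)) : ℝ≥0∞ :=
  ⨆ Y ∈ coneW n E W x, ENNReal.ofReal |u Y|

/-- The cone of aperture `α`:
`Γ_α(x) := ⋃_{Q ∋ x} ⋃_{P : ℓ(P) = ℓ(Q), αΔ_Q ∩ P ≠ ∅} Û**_P`. -/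
def coneA (W : WhitneySetup n E) (α : ℝ) (x : Euc (n + 1)) : Set (Euc (n + 1)) :=
  ⋃ Q ∈ {Q : W.ι | x ∈ W.cube Q},
    ⋃ P ∈ {P : W.ι | W.len P = W.len Q ∧
        (E ∩ ball (W.center Q) (α * W.C1 * W.len Q) ∩ W.cube P).Nonempty},
      W.Ufat P

/-- The non-tangential maximal function of aperture `α`. -/
def ntMaxA (W : WhitneySetup n E) (α : ℝ) (u : Euc (n + 1) → ℝ) (x : Euc (n + 1)) : ℝ≥0∞ :=
  ⨆ Y ∈ coneA n E W α x, ENNReal.ofReal |u Y|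

/-- The complement of the big ball `B(z₀, c · diam E)`, nonempty only when `E` is bounded;
it is the extra part of the hatted cones `Γ̂`. -/
def farSet (z₀ : Euc (n + 1)) (c : ℝ) : Set (Euc (n + 1)) :=
  {Y | EMetric.diam E ≠ ⊤ ∧ c * (EMetric.diam E).toReal < dist Y z₀}

/-- Non-tangential maximal function over the hatted cones `Γ̂(x)`. -/
def ntMaxHat (W : WhitneySetup n E) (c : ℝ) (u : Euc (n + 1) → ℝ) (x : Euc (n + 1)) : ℝ≥0∞ :=
  ⨆ Y ∈ coneW n E W x ∪ farSet n E W.z0 c, ENNReal.ofReal |u Y|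

/-- Non-tangential maximal function of aperture `α` over the hatted cones `Γ̂_α(x)`. -/
def ntMaxHatA (W : WhitneySetup n E) (α c : ℝ) (u : Euc (n + 1) → ℝ) (x : Euc (n + 1)) : ℝ≥0∞ :=
  ⨆ Y ∈ coneA n E W α x ∪ farSet n E W.z0 c, ENNReal.ofReal |u Y|

/-- The dyadic maximal operator `M_𝔻` on `E`. -/
def dyadMax (W : WhitneySetup n E) (g : Euc (n + 1) → ℝ≥0∞) (x : Euc (n + 1)) : ℝ≥0∞ :=
  ⨆ Q ∈ {Q : W.ι | x ∈ W.cube Q},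
    (sigmaE n E (W.cube Q))⁻¹ * ∫⁻ z in W.cube Q, g z ∂(sigmaE n E)

/-- The Carleson box `T_Q`. -/
def carlBox (W : WhitneySetup n E) (Q : W.ι) : Set (Euc (n + 1)) :=
  interior (⋃ Q' ∈ {Q' : W.ι | W.cube Q' ⊆ W.cube Q}, W.U Q')

/-- The dyadic Carleson functional `𝒞_𝔻(∇f)`, over the augmented family `𝔻*` (when
`diam E < ∞`, pseudo-cubes `F_k` with `T_{F_k} = B(z₀, 2^k diam E)`, `k ≥ Λ₀`, are added). -/
def cDyad (W : WhitneySetup n E) (f : Euc (n + 1) → ℝ) (x : Euc (n + 1)) : ℝ≥0∞ :=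
  (⨆ Q ∈ {Q : W.ι | x ∈ W.cube Q},
      (ENNReal.ofReal (W.len Q ^ n))⁻¹ * totalVar n f (carlBox n E W Q)) ⊔
  (⨆ k ∈ {k : ℕ | W.lam0 ≤ k ∧ EMetric.diam E ≠ ⊤},
      (ENNReal.ofReal ((2 ^ k * (EMetric.diam E).toReal) ^ n))⁻¹ *
        totalVar n f (ball W.z0 (2 ^ k * (EMetric.diam E).toReal) \ E))

/-- Oscillation of `u` over a set `A`. -/
def oscE (u : Euc (n + 1) → ℝ) (A : Set (Euc (n + 1))) : ℝ≥0∞ :=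
  ⨆ Y ∈ A, ⨆ Z ∈ A, ENNReal.ofReal (u Y - u Z)

/-- `M_𝔻(N_* u)(Q) := sup_{R ⊇ Q} ⨍_R N_* u dσ`. -/
def mval (W : WhitneySetup n E) (u : Euc (n + 1) → ℝ) (Q : W.ι) : ℝ≥0∞ :=
  ⨆ R ∈ {R : W.ι | W.cube Q ⊆ W.cube R},
    (sigmaE n E (W.cube R))⁻¹ * ∫⁻ y in W.cube R, ntMax n E W u y ∂(sigmaE n E)

/-- The component `U_Q^i` is red: `osc_{U_Q^i} u > ε M_𝔻(N_*u)(Q)`. -/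
def isRed (W : WhitneySetup n E) (u : Euc (n + 1) → ℝ) (ε : ℝ) (Q : W.ι) (i : ℕ) : Prop :=
  ENNReal.ofReal ε * mval n E W u Q < oscE n u (W.comp Q i)

/-- The collection `ℛ` of "large oscillation" cubes. -/
def RedSet (W : WhitneySetup n E) (u : Euc (n + 1) → ℝ) (ε : ℝ) : Set W.ι :=
  {Q | ∃ i, i < W.ncomp Q ∧ isRed n E W u ε Q i}

/-- The sawtooth region `Ω_𝒜` over a family of cubes. -/
def sawtooth (W : WhitneySetup n E) (A : Set W.ι) : Set (Euc (n + 1)) :=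
  interior (⋃ Q ∈ A, W.U Q)

/-! ### The bilateral corona decomposition -/

/-- A Lipschitz graph in `ℝ^{n+1}` with Lipschitz constant at most `eta`. -/
def IsLipschitzGraph (eta : ℝ) (G : Set (Euc (n + 1))) : Prop :=
  ∃ (L : WithLp 2 (EuclideanSpace ℝ (Fin n) × ℝ) ≃ₗᵢ[ℝ] Euc (n + 1))
    (g : EuclideanSpace ℝ (Fin n) → ℝ),
      LipschitzWith (Real.toNNReal eta) g ∧
        G = Set.range fun x : EuclideanSpace ℝ (Fin n) =>
          L ((WithLp.equiv 2 (EuclideanSpace ℝ (Fin n) × ℝ)).symm (x, g x))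

/-- The bilateral corona decomposition `𝔻(E) = 𝒢 ∪ ℬ` of Hofmann–Martell–Mayboroda:
`𝒢` is a disjoint union of coherent stopping time regimes `𝒮`; the bad cubes and the maximal
cubes `Q(𝒮)` satisfy a Carleson packing condition; each regime is well approximated by a
Lipschitz graph; and the Whitney region of each good cube has exactly two components. -/
structure Corona (W : WhitneySetup n E) where
  Regime : Type
  regime : Regime → Set W.ι
  top : Regime → W.ι
  top_mem : ∀ s, top s ∈ regime s
  regime_disj : ∀ s t, s ≠ t → Disjoint (regime s) (regime t)
  coh_max : ∀ s, ∀ Q ∈ regime s, W.cube Q ⊆ W.cube (top s)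
  coh_between : ∀ s, ∀ Q ∈ regime s, ∀ P, W.cube Q ⊆ W.cube P →
      W.cube P ⊆ W.cube (top s) → P ∈ regime s
  Good : Set W.ι
  good_eq : Good = ⋃ s, regime s
  Cb : ℝ
  Cb_pos : 0 < Cb
  pack : ∀ Q₀ : W.ι,
    (∑' Q : {Q : W.ι // Q ∉ Good ∧ W.cube Q ⊆ W.cube Q₀}, sigmaE n E (W.cube Q.1)) +
      (∑' s : {s : Regime // W.cube (top s) ⊆ W.cube Q₀}, sigmaE n E (W.cube (top s.1)))
        ≤ ENNReal.ofReal Cb * sigmaE n E (W.cube Q₀)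
  good_two : ∀ Q ∈ Good, W.ncomp Q = 2
  Xp : W.ι → Euc (n + 1)
  Xm : W.ι → Euc (n + 1)
  Xp_mem : ∀ Q ∈ Good, Xp Q ∈ W.comp Q 0
  Xm_mem : ∀ Q ∈ Good, Xm Q ∈ W.comp Q 1
  eta : ℝ
  KK : ℝ
  eta_pos : 0 < eta
  eta_lt : eta < 1
  KK_ge : 1 ≤ KK
  graph : Regime → Set (Euc (n + 1))
  graph_lip : ∀ s, IsLipschitzGraph n eta (graph s)
  graph_approx : ∀ s, ∀ Q ∈ regime s,
    (∀ x ∈ E ∩ ball (W.center Q) (KK * W.len Q), infDist x (graph s) < eta * W.len Q) ∧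
      (∀ y ∈ graph s ∩ ball (W.center Q) (KK * W.len Q), infDist y E < eta * W.len Q)

/-- `Y_Q^+ := X_{Q̃}^+` where `Q̃` is the dyadic parent of `Q`, unless `Q = Q(𝒮)` in which
case `Y_Q^+ := X_Q^+`. -/
def Yp (W : WhitneySetup n E) (C : Corona n E W) (s : C.Regime) (Q : W.ι) : Euc (n + 1) :=
  C.Xp (if Q = C.top s then Q else W.parent Q)

/-- `Y_Q^-`, as in `Yp`. -/
def Ym (W : WhitneySetup n E) (C : Corona n E W) (s : C.Regime) (Q : W.ι) : Euc (n + 1) :=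
  C.Xm (if Q = C.top s then Q else W.parent Q)

/-! ### Generation cubes -/

/-- The stopping condition for the generation-cube construction started at `Q₀`. -/
def stopCond (W : WhitneySetup n E) (C : Corona n E W) (u : Euc (n + 1) → ℝ) (ε : ℝ)
    (s : C.Regime) (Q₀ Q : W.ι) : Prop :=
  Q ∉ C.regime s ∨
    ENNReal.ofReal ε * mval n E W u Q <
      ENNReal.ofReal |u (Yp n E W C s Q) - u (Yp n E W C s Q₀)| ∨
    ENNReal.ofReal ε * mval n E W u Q <
      ENNReal.ofReal |u (Ym n E W C s Q) - u (Ym n E W C s Q₀)|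

/-- The maximal stopping cubes `ℱ₁(Q₀)` of the generation construction started at `Q₀`. -/
def firstStop (W : WhitneySetup n E) (C : Corona n E W) (u : Euc (n + 1) → ℝ) (ε : ℝ)
    (s : C.Regime) (Q₀ : W.ι) : Set W.ι :=
  {Q | W.cube Q ⊂ W.cube Q₀ ∧ stopCond n E W C u ε s Q₀ Q ∧
    ∀ R, W.cube Q ⊂ W.cube R → W.cube R ⊂ W.cube Q₀ → ¬stopCond n E W C u ε s Q₀ R}

/-- The first generation cubes `G₁(Q₀) := ℱ₁(Q₀) ∩ 𝒮`. -/
def firstGen (W : WhitneySetup n E) (C : Corona n E W) (u : Euc (n + 1) → ℝ) (ε : ℝ)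
    (s : C.Regime) (Q₀ : W.ι) : Set W.ι :=
  firstStop n E W C u ε s Q₀ ∩ C.regime s

/-- The `k`-th generation cubes of the regime `s`. -/
def genFam (W : WhitneySetup n E) (C : Corona n E W) (u : Euc (n + 1) → ℝ) (ε : ℝ)
    (s : C.Regime) : ℕ → Set W.ι
  | 0 => {C.top s}
  | k + 1 => ⋃ Q ∈ genFam W C u ε s k, firstGen n E W C u ε s Q

/-- All generation cubes `G(𝒮)` of the regime `s`. -/
def genCubes (W : WhitneySetup n E) (C : Corona n E W) (u : Euc (n + 1) → ℝ) (ε : ℝ)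
    (s : C.Regime) : Set W.ι :=
  ⋃ k, genFam n E W C u ε s k

/-- All generation cubes `G* := ⋃_𝒮 G(𝒮)`. -/
def genStar (W : WhitneySetup n E) (C : Corona n E W) (u : Euc (n + 1) → ℝ) (ε : ℝ) :
    Set W.ι :=
  ⋃ s, genCubes n E W C u ε s

/-- The semicoherent subregime `𝒮'(Q₀)`: subcubes of `Q₀` not contained in any stopping cube. -/
def genReg (W : WhitneySetup n E) (C : Corona n E W) (u : Euc (n + 1) → ℝ) (ε : ℝ)
    (s : C.Regime) (Q₀ : W.ι) : Set W.ι :=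
  {Q | W.cube Q ⊆ W.cube Q₀ ∧ ∀ P ∈ firstStop n E W C u ε s Q₀, ¬W.cube Q ⊆ W.cube P}

/-! ### Principal cubes -/

/-- Stopping condition of the principal-cube construction. -/
def princStop (W : WhitneySetup n E) (u : Euc (n + 1) → ℝ) (Q' Q : W.ι) : Prop :=
  2 * mval n E W u Q < mval n E W u Q'

/-- One step of the principal-cube construction. -/
def princNext (W : WhitneySetup n E) (u : Euc (n + 1) → ℝ) (P : Set W.ι) : Set W.ι :=
  P ∪ {Q' | Q' ∉ P ∧ ∃ Q ∈ P, W.cube Q' ⊂ W.cube Q ∧ princStop n E W u Q' Q ∧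
    ∀ Q'', W.cube Q' ⊂ W.cube Q'' → W.cube Q'' ⊂ W.cube Q →
      Q'' ∉ P ∧ ¬princStop n E W u Q'' Q}

/-- The stages `𝒫_k` of the principal-cube construction started from `I`. -/
def princFam (W : WhitneySetup n E) (u : Euc (n + 1) → ℝ) (I : Set W.ι) : ℕ → Set W.ι
  | 0 => I
  | k + 1 => princNext n E W u (princFam W u I k)

/-- The collection `𝒫` of principal cubes. -/
def princ (W : WhitneySetup n E) (u : Euc (n + 1) → ℝ) (I : Set W.ι) : Set W.ι :=
  ⋃ k, princFam n E W u I k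

/-- `P = π_𝒫 Q`, the smallest cube of `𝒫` containing `Q`. -/
def IsProj (W : WhitneySetup n E) (P𝒫 : Set W.ι) (Q P : W.ι) : Prop :=
  P ∈ P𝒫 ∧ W.cube Q ⊆ W.cube P ∧ ∀ R ∈ P𝒫, W.cube Q ⊆ W.cube R → W.len P ≤ W.len R

/-- `I` is an increasing exhausting sequence of cubes. -/
def Exhausting (W : WhitneySetup n E) (I : Set W.ι) : Prop :=
  (∀ Q ∈ I, ∀ P ∈ I, W.cube Q ⊆ W.cube P ∨ W.cube P ⊆ W.cube Q) ∧
    (⋃ Q ∈ I, W.cube Q) = E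

/-! ### The construction of the local approximating function on `T_{Q₀}` -/

/-- The data of the Hofmann–Martell–Mayboroda construction of the approximating function on
the Carleson box `T_{Q₀}`: an ordered family of generation cubes `Q_k = Q(𝒮'_k)` whose
subregimes cover `𝒢 ∩ 𝔻_{Q₀}`, an enumeration of the cubes of `(ℛ ∪ ℬ) ∩ 𝔻_{Q₀}`, and a
choice of Whitney centers in each component (used for the blue components). -/
structure LocalApprox (W : WhitneySetup n E) (C : Corona n E W)
    (u : Euc (n + 1) → ℝ) (ε : ℝ) (Q₀ : W.ι) where
  regOf : ℕ → C.Regime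
  seq : ℕ → W.ι
  seq_mem : ∀ k, seq k ∈ C.regime (regOf k)
  seq_gen : ∀ k, seq k ∈ genCubes n E W C u ε (regOf k)
  seq_mono : ∀ k, W.len (seq (k + 1)) ≤ W.len (seq k)
  seq_covers : ∀ Q ∈ C.Good, W.cube Q ⊆ W.cube Q₀ →
      ∃ k, Q ∈ genReg n E W C u ε (regOf k) (seq k)
  bad : ℕ → Option W.ι
  bad_mem : ∀ k Q, bad k = some Q →
      (Q ∈ RedSet n E W u ε ∨ Q ∉ C.Good) ∧ W.cube Q ⊆ W.cube Q₀
  bad_surj : ∀ Q, (Q ∈ RedSet n E W u ε ∨ Q ∉ C.Good) → W.cube Q ⊆ W.cube Q₀ →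
      ∃ k, bad k = some Q
  blueCtr : W.ι → ℕ → Euc (n + 1)
  blueCtr_mem : ∀ Q i, i < W.ncomp Q → blueCtr Q i ∈ W.comp Q i

variable {W : WhitneySetup n E} {C : Corona n E W} {u : Euc (n + 1) → ℝ} {ε : ℝ} {Q₀ : W.ι}

/-- `Ω_{𝒮'_k}`. -/
def OmegaSk (L : LocalApprox n E W C u ε Q₀) (k : ℕ) : Set (Euc (n + 1)) :=
  interior (⋃ Q ∈ genReg n E W C u ε (L.regOf k) (L.seq k), W.U Q)

/-- `Ω_{𝒮'_k}^+`. -/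
def OmegaSkP (L : LocalApprox n E W C u ε Q₀) (k : ℕ) : Set (Euc (n + 1)) :=
  interior (⋃ Q ∈ genReg n E W C u ε (L.regOf k) (L.seq k), W.comp Q 0)

/-- `Ω_{𝒮'_k}^-`. -/
def OmegaSkM (L : LocalApprox n E W C u ε Q₀) (k : ℕ) : Set (Euc (n + 1)) :=
  interior (⋃ Q ∈ genReg n E W C u ε (L.regOf k) (L.seq k), W.comp Q 1)

/-- `A_k^+ := Ω_{𝒮_k'}^+ \ (A_1 ∪ … ∪ A_{k-1})`. -/
def Ap (L : LocalApprox n E W C u ε Q₀) (k : ℕ) : Set (Euc (n + 1)) :=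
  OmegaSkP n E L k \ ⋃ j ∈ Finset.range k, OmegaSk n E L j

/-- `A_k^-`. -/
def Am (L : LocalApprox n E W C u ε Q₀) (k : ℕ) : Set (Euc (n + 1)) :=
  OmegaSkM n E L k \ ⋃ j ∈ Finset.range k, OmegaSk n E L j

/-- `φ₀ := Σ_k (u(Y_{Q_k}^+) 1_{A_k^+} + u(Y_{Q_k}^-) 1_{A_k^-})`. -/
def phi0 (L : LocalApprox n E W C u ε Q₀) (Y : Euc (n + 1)) : ℝ :=
  ∑' k : ℕ,
    ((Ap n E L k).indicator (fun _ => u (Yp n E W C (L.regOf k) (L.seq k))) Y +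
      (Am n E L k).indicator (fun _ => u (Ym n E W C (L.regOf k) (L.seq k))) Y)

/-- The Whitney region of the `k`-th enumerated bad/red cube. -/
def Ubad (L : LocalApprox n E W C u ε Q₀) (k : ℕ) : Set (Euc (n + 1)) :=
  (L.bad k).elim ∅ W.U

/-- `V_k := U_{Q(k)} \ (V_1 ∪ … ∪ V_{k-1})`. -/
def Vk (L : LocalApprox n E W C u ε Q₀) (k : ℕ) : Set (Euc (n + 1)) :=
  Ubad n E L k \ ⋃ j ∈ Finset.range k, Ubad n E L j

/-- `V_k^i := U_{Q(k)}^i \ (V_1 ∪ … ∪ V_{k-1})`. -/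
def Vki (L : LocalApprox n E W C u ε Q₀) (k i : ℕ) : Set (Euc (n + 1)) :=
  ((L.bad k).elim ∅ fun Q => W.comp Q i) \ ⋃ j ∈ Finset.range k, Ubad n E L j

/-- `φ₁ := u` on the red pieces `V_k^i` and `φ₁ := u(X_I)` on the blue pieces. -/
def phi1 (L : LocalApprox n E W C u ε Q₀) (Y : Euc (n + 1)) : ℝ :=
  ∑' k : ℕ, ∑' i : ℕ,
    (Vki n E L k i).indicator
      (fun Z => (L.bad k).elim 0 fun Q =>
        if isRed n E W u ε Q i then u Z else u (L.blueCtr Q i)) Y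

/-- `Ω₁ := int (⋃_k V_k)`. -/
def Omega1 (L : LocalApprox n E W C u ε Q₀) : Set (Euc (n + 1)) :=
  interior (⋃ k, Vk n E L k)

/-- The approximating function `φ` on the Carleson box `T_{Q₀}`:
`φ = φ₁` on `Ω₁`, `φ = u` on `∂Ω₁` and `φ = φ₀` elsewhere. -/
def phiLoc (L : LocalApprox n E W C u ε Q₀) (Y : Euc (n + 1)) : ℝ :=
  if Y ∈ Omega1 n E L then phi1 n E L Y
  else if Y ∈ closure (Omega1 n E L) then u Y
  else phi0 n E L Y

/-! ### Whitney boxes and their fattened versions (for the red/blue component geometry) -/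

/-- The closed axis-parallel box with center `c` and side length `l`. -/
def boxSet (c : Euc (n + 1)) (l : ℝ) : Set (Euc (n + 1)) :=
  {Y | ∀ i, |Y i - c i| ≤ l / 2}

/-- The collections `𝒲_Q^±` of Whitney cubes (recorded by their centers and side lengths)
making up the two components of the Whitney regions of good cubes, together with the
fattening parameter `τ`; `I* = (1+τ)I`, `I** = (1+2τ)I`, `I*** = (1+3τ)I`. -/
structure WhitneyCubes (W : WhitneySetup n E) (C : Corona n E W) where
  τ : ℝ
  τ_pos : 0 < τ
  τ_lt : τ < 1
  cb : ℝ
  cb_ge : 1 ≤ cb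
  Wp : W.ι → Finset (Euc (n + 1) × ℝ)
  Wm : W.ι → Finset (Euc (n + 1) × ℝ)
  side_pos : ∀ Q : W.ι, ∀ p ∈ Wp Q ∪ Wm Q, 0 < p.2
  len_comp : ∀ Q : W.ι, ∀ p ∈ Wp Q ∪ Wm Q, W.len Q / cb ≤ p.2 ∧ p.2 ≤ cb * W.len Q
  delta_comp : ∀ Q : W.ι, ∀ p ∈ Wp Q ∪ Wm Q, ∀ Y ∈ boxSet n p.1 ((1 + 3 * τ) * p.2),
      p.2 / cb ≤ infDist Y E ∧ infDist Y E ≤ cb * p.2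
  near : ∀ Q : W.ι, ∀ p ∈ Wp Q ∪ Wm Q, infDist p.1 (W.cube Q) ≤ cb * W.len Q
  comp0_eq : ∀ Q ∈ C.Good, W.comp Q 0 = ⋃ p ∈ Wp Q, interior (boxSet n p.1 ((1 + τ) * p.2))
  comp1_eq : ∀ Q ∈ C.Good, W.comp Q 1 = ⋃ p ∈ Wm Q, interior (boxSet n p.1 ((1 + τ) * p.2))
  overlap_len : ∀ Q ∈ C.Good, ∀ Q' ∈ C.Good, ∀ p ∈ Wp Q, ∀ q ∈ Wp Q',
      (boxSet n p.1 ((1 + 3 * τ) * p.2) ∩ boxSet n q.1 ((1 + 3 * τ) * q.2)).Nonempty →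
        p.2 ≤ cb * q.2 ∧ W.len Q ≤ cb * W.len Q'

/-! ### The three notions of `ε`-approximability -/

/-- `u` is `ε`-approximable (in `L^∞`). -/
def EpsApproxLinf (u : Euc (n + 1) → ℝ) (ε : ℝ) : Prop :=
  ∃ φ, BVloc n φ Eᶜ ∧ (∀ Y ∈ Eᶜ, |u Y - φ Y| < ε) ∧
    ∃ Cε : ℝ, ∀ x ∈ E, ∀ r : ℝ, 0 < r →
      totalVar n φ (ball x r \ E) ≤ ENNReal.ofReal (Cε * r ^ n)

/-- `u` is `ε`-approximable in `L^p`. -/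
def EpsApproxLp (W : WhitneySetup n E) (u : Euc (n + 1) → ℝ) (p ε : ℝ) : Prop :=
  ∃ φ, BVloc n φ Eᶜ ∧ ∃ Cp Dpe : ℝ≥0∞, Cp ≠ ⊤ ∧ Dpe ≠ ⊤ ∧
    lpNormE (sigmaE n E) p (ntMax n E W fun Y => u Y - φ Y) ≤
      ENNReal.ofReal ε * Cp * lpNormE (sigmaE n E) p (ntMax n E W u) ∧
    lpNormE (sigmaE n E) p (carlGrad n E φ) ≤
      Dpe * lpNormE (sigmaE n E) p (ntMax n E W u)

/-- `u` is pointwise `ε`-approximable. -/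
def PtwiseApprox (W : WhitneySetup n E) (u : Euc (n + 1) → ℝ) (ε : ℝ) : Prop :=
  ∃ φ, BVloc n φ Eᶜ ∧ ∃ K D : ℝ≥0∞, K ≠ ⊤ ∧ D ≠ ⊤ ∧
    ∀ᵐ x ∂(sigmaE n E),
      ntMax n E W (fun Y => u Y - φ Y) x ≤
        K * ENNReal.ofReal ε * dyadMax n E W (ntMax n E W u) x ∧
      cDyad n E W φ x ≤ D * hlMax n E (dyadMax n E W (ntMax n E W u)) x

end
section PrincipalAux

variable (n : ℕ) (E : Set (Euc (n + 1))) (W : WhitneySetup n E) (u : Euc (n + 1) → ℝ)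

private lemma mval_anti {Q R : W.ι} (h : W.cube Q ⊆ W.cube R) :
    mval n E W u R ≤ mval n E W u Q := by
  simp only [mval]
  exact biSup_mono fun S hS => h.trans hS

private lemma avg_le_mval (Q : W.ι) :
    (sigmaE n E (W.cube Q))⁻¹ * ∫⁻ y in W.cube Q, ntMax n E W u y ∂(sigmaE n E) ≤
      mval n E W u Q := by
  simp only [mval]
  exact le_iSup₂_of_le Q (show Q ∈ {R : W.ι | W.cube Q ⊆ W.cube R} from fun _ hx => hx) le_rfl

private lemma exists_heavy {P : W.ι} {c : ℝ≥0∞} (h : c < mval n E W u P) :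
    ∃ R : W.ι, W.cube P ⊆ W.cube R ∧
      c < (sigmaE n E (W.cube R))⁻¹ * ∫⁻ y in W.cube R, ntMax n E W u y ∂(sigmaE n E) := by
  simp only [mval, lt_iSup_iff] at h
  obtain ⟨R, hmem, hlt⟩ := h
  exact ⟨R, hmem, hlt⟩

private lemma exists_max_cube (s : Finset W.ι) :
    ∀ R ∈ s, ∃ M ∈ s, W.cube R ⊆ W.cube M ∧
      ∀ R' ∈ s, W.cube M ⊆ W.cube R' → W.cube R' = W.cube M := by
  induction s using Finset.strongInduction with
  | _ s ih =>
    intro R hR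
    by_cases h : ∀ R' ∈ s, W.cube R ⊆ W.cube R' → W.cube R' = W.cube R
    · exact ⟨R, hR, subset_rfl, h⟩
    · push_neg at h
      obtain ⟨R', hR's, hsub, hne⟩ := h
      have hRne : R' ≠ R := by rintro rfl; exact hne rfl
      obtain ⟨M, hM, hsub2, hmax⟩ :=
        ih (s.erase R) (Finset.erase_ssubset hR) R' (Finset.mem_erase.mpr ⟨hRne, hR's⟩)
      refine ⟨M, Finset.mem_of_mem_erase hM, hsub.trans hsub2, ?_⟩
      intro R'' hR'' hMR
      by_cases hc : R'' = R
      · subst hc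
        exact Set.Subset.antisymm (hsub.trans hsub2) hMR
      · exact hmax R'' (Finset.mem_erase.mpr ⟨hc, hR''⟩) hMR

private lemma cheb (Q Q₀ : W.ι) (hfin : sigmaE n E (W.cube Q₀) ≠ ⊤)
    (hQQ₀ : W.cube Q ⊆ W.cube Q₀) (F : Finset W.ι)
    (hF : ∀ P ∈ F, W.cube P ⊂ W.cube Q ∧ princStop n E W u P Q ∧
      ∀ Q'', W.cube P ⊂ W.cube Q'' → W.cube Q'' ⊂ W.cube Q → ¬princStop n E W u Q'' Q) :
    ∑ P ∈ F, sigmaE n E (W.cube P) ≤ 2⁻¹ * sigmaE n E (W.cube Q) := by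
  rcases F.eq_empty_or_nonempty with rfl | ⟨P₀, hP₀⟩
  · simp
  have hps₀ : 2 * mval n E W u Q < mval n E W u P₀ := (hF P₀ hP₀).2.1
  have hm_top : mval n E W u Q ≠ ⊤ := by
    intro h
    rw [h, ENNReal.mul_top (by norm_num)] at hps₀
    exact not_top_lt hps₀
  have hsfin : ∀ {A : Set (Euc (n + 1))}, A ⊆ W.cube Q₀ → sigmaE n E A ≠ ⊤ :=
    fun hA => ne_top_of_le_ne_top hfin (measure_mono hA)
  have hintQ : ∫⁻ y in W.cube Q, ntMax n E W u y ∂(sigmaE n E) ≤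
      mval n E W u Q * sigmaE n E (W.cube Q) := by
    by_cases hz : sigmaE n E (W.cube Q) = 0
    · rw [Measure.restrict_eq_zero.mpr hz, lintegral_zero_measure]
      exact zero_le
    · calc ∫⁻ y in W.cube Q, ntMax n E W u y ∂(sigmaE n E)
          = sigmaE n E (W.cube Q) *
            ((sigmaE n E (W.cube Q))⁻¹ * ∫⁻ y in W.cube Q, ntMax n E W u y ∂(sigmaE n E)) := by
            rw [← mul_assoc, ENNReal.mul_inv_cancel hz (hsfin hQQ₀), one_mul]
        _ ≤ sigmaE n E (W.cube Q) * mval n E W u Q :=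
            mul_le_mul_right (avg_le_mval n E W u Q) _
        _ = mval n E W u Q * sigmaE n E (W.cube Q) := mul_comm _ _
  have hm0 : mval n E W u Q ≠ 0 := by
    intro h0
    rw [h0, mul_zero] at hps₀
    obtain ⟨R, hPR, hνR⟩ := exists_heavy n E W u hps₀
    have hRQ : W.cube R ⊆ W.cube Q := by
      rcases W.nested R Q with h | h | h
      · exact h
      · exfalso
        have : (sigmaE n E (W.cube R))⁻¹ *
            ∫⁻ y in W.cube R, ntMax n E W u y ∂(sigmaE n E) ≤ mval n E W u Q := by
          simp only [mval]
          exact le_iSup₂_of_le R (show R ∈ {S : W.ι | W.cube Q ⊆ W.cube S} from h) le_rfl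
        rw [h0] at this
        exact absurd hνR (not_lt.mpr this)
      · exfalso
        obtain ⟨x, hx⟩ := W.cube_ne P₀
        exact (Set.disjoint_left.mp h (hPR hx)) ((hF P₀ hP₀).1.subset hx)
    have hz : ∫⁻ y in W.cube R, ntMax n E W u y ∂(sigmaE n E) = 0 := by
      have h1 := lintegral_mono_set (μ := sigmaE n E) (f := ntMax n E W u) hRQ
      have h2 := hintQ
      rw [h0, zero_mul] at h2
      exact le_antisymm (h1.trans h2) (zero_le)
    rw [hz, mul_zero] at hνR
    exact lt_irrefl 0 hνR
  have hRex : ∀ P : W.ι, ∃ R : W.ι, P ∈ F → W.cube P ⊆ W.cube R ∧ W.cube R ⊆ W.cube Q ∧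
      2 * mval n E W u Q <
        (sigmaE n E (W.cube R))⁻¹ * ∫⁻ y in W.cube R, ntMax n E W u y ∂(sigmaE n E) := by
    intro P
    by_cases hP : P ∈ F
    · obtain ⟨hss, hps, -⟩ := hF P hP
      obtain ⟨R, h1, h2⟩ := exists_heavy n E W u hps
      have hRQ : W.cube R ⊆ W.cube Q := by
        rcases W.nested R Q with h | h | h
        · exact h
        · exfalso
          have hle : (sigmaE n E (W.cube R))⁻¹ *
              ∫⁻ y in W.cube R, ntMax n E W u y ∂(sigmaE n E) ≤ mval n E W u Q := by
            simp only [mval]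
            exact le_iSup₂_of_le R (show R ∈ {S : W.ι | W.cube Q ⊆ W.cube S} from h) le_rfl
          have hmle : mval n E W u Q ≤ 2 * mval n E W u Q := by
            rw [two_mul]; exact le_add_self
          exact lt_irrefl _ (lt_of_le_of_lt (hle.trans hmle) h2)
        · exfalso
          obtain ⟨x, hx⟩ := W.cube_ne P
          exact (Set.disjoint_left.mp h (h1 hx)) (hss.subset hx)
      exact ⟨R, fun _ => ⟨h1, hRQ, h2⟩⟩
    · exact ⟨P, fun h => absurd h hP⟩
  choose Rf hRf using hRex
  have hheavy : ∀ R' ∈ F.image Rf, W.cube R' ⊆ W.cube Q ∧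
      2 * mval n E W u Q <
        (sigmaE n E (W.cube R'))⁻¹ * ∫⁻ y in W.cube R', ntMax n E W u y ∂(sigmaE n E) := by
    intro R' hR'
    obtain ⟨P, hP, rfl⟩ := Finset.mem_image.mp hR'
    exact ⟨(hRf P hP).2.1, (hRf P hP).2.2⟩
  have hMex : ∀ P : W.ι, ∃ M : W.ι, P ∈ F → M ∈ F.image Rf ∧ W.cube (Rf P) ⊆ W.cube M ∧
      ∀ R' ∈ F.image Rf, W.cube M ⊆ W.cube R' → W.cube R' = W.cube M := by
    intro P
    by_cases hP : P ∈ F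
    · obtain ⟨M, h1, h2, h3⟩ :=
        exists_max_cube n E W (F.image Rf) (Rf P) (Finset.mem_image_of_mem Rf hP)
      exact ⟨M, fun _ => ⟨h1, h2, h3⟩⟩
    · exact ⟨P, fun h => absurd h hP⟩
  choose Mf hMf using hMex
  have hFdisj : ∀ P₁ ∈ F, ∀ P₂ ∈ F, P₁ ≠ P₂ → Disjoint (W.cube P₁) (W.cube P₂) := by
    have key : ∀ A ∈ F, ∀ B ∈ F, W.cube A ⊆ W.cube B → A ≠ B → False := by
      intro A hA B hB hsub hAB
      have hss : W.cube A ⊂ W.cube B :=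
        hsub.ssubset_of_ne fun h => hAB (W.cube_inj h)
      exact (hF A hA).2.2 B hss (hF B hB).1 (hF B hB).2.1
    intro P₁ h₁ P₂ h₂ hne
    rcases W.nested P₁ P₂ with h | h | h
    · exact (key P₁ h₁ P₂ h₂ h hne).elim
    · exact (key P₂ h₂ P₁ h₁ h hne.symm).elim
    · exact h
  have hmaps : ∀ P ∈ F, Mf P ∈ F.image Mf := fun P hP => Finset.mem_image_of_mem Mf hP
  have hMIm : ∀ M ∈ F.image Mf, M ∈ F.image Rf ∧
      ∀ R' ∈ F.image Rf, W.cube M ⊆ W.cube R' → W.cube R' = W.cube M := by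
    intro M hM
    obtain ⟨P, hP, rfl⟩ := Finset.mem_image.mp hM
    exact ⟨(hMf P hP).1, (hMf P hP).2.2⟩
  have step1 : ∑ P ∈ F, sigmaE n E (W.cube P) ≤
      ∑ M ∈ F.image Mf, sigmaE n E (W.cube M) := by
    rw [← Finset.sum_fiberwise_of_maps_to hmaps (fun P => sigmaE n E (W.cube P))]
    refine Finset.sum_le_sum fun M hM => ?_
    have hdisj : (↑(F.filter fun P => Mf P = M) : Set W.ι).PairwiseDisjoint W.cube := by
      intro a ha b hb hab
      exact hFdisj a (Finset.mem_filter.mp (Finset.mem_coe.mp ha)).1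
        b (Finset.mem_filter.mp (Finset.mem_coe.mp hb)).1 hab
    calc ∑ P ∈ F.filter (fun P => Mf P = M), sigmaE n E (W.cube P)
        = sigmaE n E (⋃ P ∈ F.filter (fun P => Mf P = M), W.cube P) :=
          (measure_biUnion_finset hdisj fun b _ => W.cube_meas b).symm
      _ ≤ sigmaE n E (W.cube M) := by
          refine measure_mono (Set.iUnion₂_subset fun P hP => ?_)
          have hPf := Finset.mem_filter.mp hP
          have := (hRf P hPf.1).1.trans (hMf P hPf.1).2.1
          rwa [hPf.2] at this
  have hMdisj : (↑(F.image Mf) : Set W.ι).PairwiseDisjoint W.cube := by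
    intro a ha b hb hab
    have ha' := hMIm a (Finset.mem_coe.mp ha)
    have hb' := hMIm b (Finset.mem_coe.mp hb)
    rcases W.nested a b with h | h | h
    · exact (hab (W.cube_inj (ha'.2 b hb'.1 h)).symm).elim
    · exact (hab (W.cube_inj (hb'.2 a ha'.1 h))).elim
    · exact h
  have h2m0 : (2 * mval n E W u Q) ≠ 0 := by
    simp [hm0]
  have h2mt : (2 * mval n E W u Q) ≠ ⊤ := ENNReal.mul_ne_top (by norm_num) hm_top
  have perM : ∀ M ∈ F.image Mf, sigmaE n E (W.cube M) ≤
      (2 * mval n E W u Q)⁻¹ * ∫⁻ y in W.cube M, ntMax n E W u y ∂(sigmaE n E) := by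
    intro M hM
    obtain ⟨hMQ, hMheavy⟩ := hheavy M (hMIm M hM).1
    by_cases hz : sigmaE n E (W.cube M) = 0
    · rw [hz]; exact zero_le
    · have hne : sigmaE n E (W.cube M) ≠ ⊤ := hsfin (hMQ.trans hQQ₀)
      have h1 : 2 * mval n E W u Q * sigmaE n E (W.cube M) ≤
          ∫⁻ y in W.cube M, ntMax n E W u y ∂(sigmaE n E) := by
        have h3 : sigmaE n E (W.cube M) * ((sigmaE n E (W.cube M))⁻¹ *
            ∫⁻ y in W.cube M, ntMax n E W u y ∂(sigmaE n E)) =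
            ∫⁻ y in W.cube M, ntMax n E W u y ∂(sigmaE n E) := by
          rw [← mul_assoc, ENNReal.mul_inv_cancel hz hne, one_mul]
        calc 2 * mval n E W u Q * sigmaE n E (W.cube M)
            = sigmaE n E (W.cube M) * (2 * mval n E W u Q) := mul_comm _ _
          _ ≤ sigmaE n E (W.cube M) * ((sigmaE n E (W.cube M))⁻¹ *
              ∫⁻ y in W.cube M, ntMax n E W u y ∂(sigmaE n E)) :=
            mul_le_mul_right hMheavy.le _
          _ = _ := h3
      calc sigmaE n E (W.cube M)
          = (2 * mval n E W u Q)⁻¹ * (2 * mval n E W u Q * sigmaE n E (W.cube M)) := by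
            rw [← mul_assoc, ENNReal.inv_mul_cancel h2m0 h2mt, one_mul]
        _ ≤ (2 * mval n E W u Q)⁻¹ *
            ∫⁻ y in W.cube M, ntMax n E W u y ∂(sigmaE n E) := mul_le_mul_right h1 _
  calc ∑ P ∈ F, sigmaE n E (W.cube P)
      ≤ ∑ M ∈ F.image Mf, sigmaE n E (W.cube M) := step1
    _ ≤ ∑ M ∈ F.image Mf,
        (2 * mval n E W u Q)⁻¹ * ∫⁻ y in W.cube M, ntMax n E W u y ∂(sigmaE n E) :=
        Finset.sum_le_sum perM
    _ = (2 * mval n E W u Q)⁻¹ *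
        ∑ M ∈ F.image Mf, ∫⁻ y in W.cube M, ntMax n E W u y ∂(sigmaE n E) := by
        rw [Finset.mul_sum]
    _ = (2 * mval n E W u Q)⁻¹ *
        ∫⁻ y in ⋃ M ∈ F.image Mf, W.cube M, ntMax n E W u y ∂(sigmaE n E) := by
        rw [lintegral_biUnion_finset hMdisj (fun b _ => W.cube_meas b)]
    _ ≤ (2 * mval n E W u Q)⁻¹ * ∫⁻ y in W.cube Q, ntMax n E W u y ∂(sigmaE n E) := by
        refine mul_le_mul_right (lintegral_mono_set (Set.iUnion₂_subset fun M hM => ?_)) _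
        exact (hheavy M (hMIm M hM).1).1
    _ ≤ (2 * mval n E W u Q)⁻¹ * (mval n E W u Q * sigmaE n E (W.cube Q)) :=
        mul_le_mul_right hintQ _
    _ = 2⁻¹ * sigmaE n E (W.cube Q) := by
        rw [ENNReal.mul_inv (Or.inl (by norm_num)) (Or.inl (by norm_num)), mul_assoc,
          ← mul_assoc (mval n E W u Q)⁻¹, ENNReal.inv_mul_cancel hm0 hm_top, one_mul]

end PrincipalAux

/-- Let `E ⊆ ℝ^{n+1}` be `n`-ADR, `u` harmonic on `Ω := ℝ^{n+1} \ E`, and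
let `𝒫 ⊆ 𝔻(E)` be the collection of principal (stopping) cubes built from an exhausting
increasing sequence `ℐ` and the stopping condition `M_𝔻(N_*u)(Q') > 2 M_𝔻(N_*u)(Q)`. Then
`𝒫` satisfies a Carleson packing condition `Σ_{P ∈ 𝒫, P ⊆ Q₀} σ(P) ≲ σ(Q₀)`, with implicit
constant depending only on the structural constants and the Carleson constant of `ℐ`. -/
theorem principal_cubes_carleson (n : ℕ) (E : Set (Euc (n + 1))) (CA : ℝ)
    (hADR : IsADR n E CA) (W : WhitneySetup n E) (CI : ℝ≥0∞) (hCI : CI ≠ ⊤) :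
    ∃ K : ℝ≥0∞, K ≠ ⊤ ∧
      ∀ u : Euc (n + 1) → ℝ, HarmonicOnSet n u Eᶜ →
        ∀ I : Set W.ι, Exhausting n E W I →
          (∀ Q₀ : W.ι,
            ∑' Q : {Q : W.ι // Q ∈ I ∧ W.cube Q ⊆ W.cube Q₀}, sigmaE n E (W.cube Q.1)
              ≤ CI * sigmaE n E (W.cube Q₀)) →
          ∀ Q₀ : W.ι,
            ∑' P : {P : W.ι // P ∈ princ n E W u I ∧ W.cube P ⊆ W.cube Q₀},
                sigmaE n E (W.cube P.1)
              ≤ K * sigmaE n E (W.cube Q₀) := by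
  classical
  have hCIle : CI ≤ 2 * CI + 2 := by
    calc CI = 1 * CI := (one_mul _).symm
      _ ≤ 2 * CI := mul_le_mul_left (by norm_num) _
      _ ≤ 2 * CI + 2 := le_self_add
  have h2CI : (2 * CI + 2 : ℝ≥0∞) ≠ ⊤ :=
    ENNReal.add_ne_top.mpr ⟨ENNReal.mul_ne_top (by norm_num) hCI, by norm_num⟩
  refine ⟨2 * CI + 2, h2CI, ?_⟩
  intro u hu I hI hpack Q₀
  by_cases hfin : sigmaE n E (W.cube Q₀) = ⊤
  · have hne : (2 * CI + 2 : ℝ≥0∞) ≠ 0 := by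
      intro h
      rw [add_eq_zero] at h
      exact absurd h.2 (by norm_num)
    rw [hfin, ENNReal.mul_top hne]
    exact le_top
  -- basic facts about the stages of the construction
  have hfam0 : princFam n E W u I 0 = I := rfl
  have hfamS : ∀ k, princFam n E W u I (k + 1) = princNext n E W u (princFam n E W u I k) :=
    fun _ => rfl
  have hmono : Monotone (princFam n E W u I) := by
    apply monotone_nat_of_le_succ
    intro k
    rw [hfamS k]
    exact Set.subset_union_left
  -- choice of witness data: stage and witness cube for every non-initial principal cube
  have hWex : ∀ P : W.ι, ∃ (j : ℕ) (Qw : W.ι), P ∈ princ n E W u I → P ∉ I →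
      Qw ∈ princFam n E W u I j ∧ P ∉ princFam n E W u I j ∧ P ∈ princFam n E W u I (j + 1) ∧
      W.cube P ⊂ W.cube Qw ∧ princStop n E W u P Qw ∧
      ∀ Q'', W.cube P ⊂ W.cube Q'' → W.cube Q'' ⊂ W.cube Qw →
        Q'' ∉ princFam n E W u I j ∧ ¬princStop n E W u Q'' Qw := by
    intro P
    by_cases hP : P ∈ princ n E W u I ∧ P ∉ I
    · obtain ⟨hP1, hP2⟩ := hP
      have hex : ∃ k, P ∈ princFam n E W u I k := Set.mem_iUnion.mp hP1
      have hk0 : Nat.find hex ≠ 0 := by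
        intro h
        apply hP2
        have := Nat.find_spec hex
        rwa [h, hfam0] at this
      obtain ⟨j, hj⟩ := Nat.exists_eq_succ_of_ne_zero hk0
      have hPj1 : P ∈ princFam n E W u I (j + 1) := by
        have := Nat.find_spec hex
        rwa [hj] at this
      have hPj : P ∉ princFam n E W u I j := Nat.find_min hex (by omega)
      have hmem : P ∈ princNext n E W u (princFam n E W u I j) := by
        rw [← hfamS]
        exact hPj1
      rw [princNext, Set.mem_union] at hmem
      rcases hmem with hmem | hmem
      · exact absurd hmem hPj
      · obtain ⟨-, Qw, hQw, hss, hps, hbet⟩ := hmem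
        exact ⟨j, Qw, fun _ _ => ⟨hQw, hPj, hPj1, hss, hps, hbet⟩⟩
    · exact ⟨0, P, fun h1 h2 => absurd ⟨h1, h2⟩ hP⟩
  choose jf Qf hWspec using hWex
  -- the key coherence lemma: nested non-initial principal cubes and their witnesses
  have lemD : ∀ P₁ P₂ : W.ι, P₁ ∈ princ n E W u I → P₁ ∉ I → P₂ ∈ princ n E W u I → P₂ ∉ I →
      W.cube P₁ ⊂ W.cube P₂ → W.cube P₂ ⊂ W.cube (Qf P₁) → False := by
    intro P₁ P₂ h₁ h₁' h₂ h₂' hss hssQ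
    obtain ⟨hQ₁mem, hP₁no, hP₁yes, hss₁, hps₁, hbet₁⟩ := hWspec P₁ h₁ h₁'
    obtain ⟨hQ₂mem, hP₂no, hP₂yes, hss₂, hps₂, hbet₂⟩ := hWspec P₂ h₂ h₂'
    obtain ⟨hP₂nj₁, hnps⟩ := hbet₁ P₂ hss hssQ
    have hj₁₂ : jf P₁ ≤ jf P₂ := by
      by_contra h
      push_neg at h
      exact hP₂nj₁ (hmono (show jf P₂ + 1 ≤ jf P₁ by omega) hP₂yes)
    have hQ₁k : Qf P₁ ∈ princFam n E W u I (jf P₂) := hmono hj₁₂ hQ₁mem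
    have hnotss : ¬ (W.cube (Qf P₁) ⊂ W.cube (Qf P₂)) := by
      intro hc
      exact (hbet₂ (Qf P₁) hssQ hc).1 hQ₁k
    have hsub21 : W.cube (Qf P₂) ⊆ W.cube (Qf P₁) := by
      rcases W.nested (Qf P₁) (Qf P₂) with h | h | h
      · by_cases heq : W.cube (Qf P₁) = W.cube (Qf P₂)
        · exact heq.ge
        · exact absurd (h.ssubset_of_ne heq) hnotss
      · exact h
      · exfalso
        obtain ⟨x, hx⟩ := W.cube_ne P₂
        exact (Set.disjoint_left.mp h (hssQ.subset hx)) (hss₂.subset hx)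
    have hmv : mval n E W u (Qf P₁) ≤ mval n E W u (Qf P₂) := mval_anti n E W u hsub21
    simp only [princStop] at hps₂ hnps
    exact absurd hps₂ (not_lt.mpr ((not_lt.mp hnps).trans (mul_le_mul_right hmv 2)))
  -- initial-family bound
  have hIbound : ∀ G : Finset W.ι, (∀ P ∈ G, P ∈ I ∧ W.cube P ⊆ W.cube Q₀) →
      ∑ P ∈ G, sigmaE n E (W.cube P) ≤ CI * sigmaE n E (W.cube Q₀) := by
    intro G hG
    have h1 : ∑ P ∈ G, sigmaE n E (W.cube P) ≤
        ∑' Q : {Q : W.ι // Q ∈ I ∧ W.cube Q ⊆ W.cube Q₀}, sigmaE n E (W.cube Q.1) := by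
      have heq : ∑' Q : {Q : W.ι // Q ∈ I ∧ W.cube Q ⊆ W.cube Q₀}, sigmaE n E (W.cube Q.1) =
          ∑' Q : W.ι, ({Q : W.ι | Q ∈ I ∧ W.cube Q ⊆ W.cube Q₀}).indicator
            (fun P => sigmaE n E (W.cube P)) Q :=
        tsum_subtype {Q : W.ι | Q ∈ I ∧ W.cube Q ⊆ W.cube Q₀} (fun P => sigmaE n E (W.cube P))
      rw [heq]
      calc ∑ P ∈ G, sigmaE n E (W.cube P)
          = ∑ P ∈ G, ({Q : W.ι | Q ∈ I ∧ W.cube Q ⊆ W.cube Q₀}).indicator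
            (fun P => sigmaE n E (W.cube P)) P := by
            refine Finset.sum_congr rfl fun P hP => ?_
            exact (Set.indicator_of_mem
              (show P ∈ {Q : W.ι | Q ∈ I ∧ W.cube Q ⊆ W.cube Q₀} from hG P hP)
              (fun P => sigmaE n E (W.cube P))).symm
        _ ≤ _ := ENNReal.sum_le_tsum G
    exact h1.trans (hpack Q₀)
  -- the main finite bound, by induction on the stage
  have key : ∀ k, ∀ F : Finset W.ι,
      (∀ P ∈ F, P ∈ princFam n E W u I k ∧ W.cube P ⊆ W.cube Q₀) →
      ∑ P ∈ F, sigmaE n E (W.cube P) ≤ (2 * CI + 2) * sigmaE n E (W.cube Q₀) := by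
    intro k
    induction k with
    | zero =>
      intro F hF
      exact (hIbound F fun P hP => ⟨(hF P hP).1, (hF P hP).2⟩).trans
        (mul_le_mul_left hCIle _)
    | succ k ih =>
      intro F hF
      have hFP : ∀ P ∈ F, P ∈ princ n E W u I :=
        fun P hP => Set.mem_iUnion.mpr ⟨k + 1, (hF P hP).1⟩
      rw [← Finset.sum_filter_add_sum_filter_not F (· ∈ I) (fun P => sigmaE n E (W.cube P))]
      have hpartI : ∑ P ∈ F.filter (· ∈ I), sigmaE n E (W.cube P) ≤
          CI * sigmaE n E (W.cube Q₀) := by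
        refine hIbound _ fun P hP => ?_
        have h := Finset.mem_filter.mp hP
        exact ⟨h.2, (hF P h.1).2⟩
      set F' := F.filter (fun P => ¬ P ∈ I) with hF'def
      have hspec : ∀ P ∈ F', jf P ≤ k ∧ Qf P ∈ princFam n E W u I k ∧
          W.cube P ⊂ W.cube (Qf P) ∧ princStop n E W u P (Qf P) ∧
          ∀ Q'', W.cube P ⊂ W.cube Q'' → W.cube Q'' ⊂ W.cube (Qf P) →
            ¬princStop n E W u Q'' (Qf P) := by
        intro P hP
        have hPF := Finset.mem_filter.mp hP
        obtain ⟨hQm, hPno, hPyes, hss, hps, hbet⟩ := hWspec P (hFP P hPF.1) hPF.2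
        have hjk : jf P ≤ k := by
          by_contra h
          push_neg at h
          exact hPno (hmono (show k + 1 ≤ jf P by omega) (hF P hPF.1).1)
        exact ⟨hjk, hmono hjk hQm, hss, hps, fun Q'' h1 h2 => (hbet Q'' h1 h2).2⟩
      rw [← Finset.sum_filter_add_sum_filter_not F' (fun P => W.cube (Qf P) ⊆ W.cube Q₀)
        (fun P => sigmaE n E (W.cube P))]
      have hint : ∑ P ∈ F'.filter (fun P => W.cube (Qf P) ⊆ W.cube Q₀),
          sigmaE n E (W.cube P) ≤ (CI + 1) * sigmaE n E (W.cube Q₀) := by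
        set Fint := F'.filter (fun P => W.cube (Qf P) ⊆ W.cube Q₀) with hFint
        have hmaps : ∀ P ∈ Fint, Qf P ∈ Fint.image Qf :=
          fun P hP => Finset.mem_image_of_mem _ hP
        rw [← Finset.sum_fiberwise_of_maps_to hmaps (fun P => sigmaE n E (W.cube P))]
        have hGsum : ∑ Q ∈ Fint.image Qf, sigmaE n E (W.cube Q) ≤
            (2 * CI + 2) * sigmaE n E (W.cube Q₀) := by
          refine ih _ fun Q hQ => ?_
          obtain ⟨P, hP, rfl⟩ := Finset.mem_image.mp hQ
          have hPF' := Finset.mem_filter.mp hP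
          exact ⟨(hspec P hPF'.1).2.1, hPF'.2⟩
        calc ∑ Q ∈ Fint.image Qf, ∑ P ∈ Fint.filter (fun P => Qf P = Q),
              sigmaE n E (W.cube P)
            ≤ ∑ Q ∈ Fint.image Qf, 2⁻¹ * sigmaE n E (W.cube Q) := by
              refine Finset.sum_le_sum fun Q hQ => ?_
              obtain ⟨P', hP', hP'Q⟩ := Finset.mem_image.mp hQ
              have hQsub : W.cube Q ⊆ W.cube Q₀ := by
                rw [← hP'Q]
                exact (Finset.mem_filter.mp hP').2
              refine cheb n E W u Q Q₀ hfin hQsub _ fun P hP => ?_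
              have hPf := Finset.mem_filter.mp hP
              have hs := hspec P (Finset.mem_filter.mp hPf.1).1
              rw [← hPf.2]
              exact ⟨hs.2.2.1, hs.2.2.2.1, hs.2.2.2.2⟩
          _ = 2⁻¹ * ∑ Q ∈ Fint.image Qf, sigmaE n E (W.cube Q) := (Finset.mul_sum _ _ _).symm
          _ ≤ 2⁻¹ * ((2 * CI + 2) * sigmaE n E (W.cube Q₀)) := mul_le_mul_right hGsum _
          _ = (CI + 1) * sigmaE n E (W.cube Q₀) := by
              rw [← mul_assoc, show (2 * CI + 2 : ℝ≥0∞) = 2 * (CI + 1) by ring,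
                ← mul_assoc, ENNReal.inv_mul_cancel (by norm_num) (by norm_num), one_mul]
      have hext : ∑ P ∈ F'.filter (fun P => ¬ W.cube (Qf P) ⊆ W.cube Q₀),
          sigmaE n E (W.cube P) ≤ sigmaE n E (W.cube Q₀) := by
        set Fext := F'.filter (fun P => ¬ W.cube (Qf P) ⊆ W.cube Q₀) with hFext
        have key2 : ∀ x ∈ Fext, ∀ y ∈ Fext, W.cube x ⊆ W.cube y → x ≠ y → False := by
          intro x hx y hy hsub hne
          have hxF' := Finset.mem_filter.mp hx
          have hxF := Finset.mem_filter.mp hxF'.1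
          have hyF' := Finset.mem_filter.mp hy
          have hyF := Finset.mem_filter.mp hyF'.1
          have hssxy : W.cube x ⊂ W.cube y :=
            hsub.ssubset_of_ne fun h => hne (W.cube_inj h)
          have hxQf : W.cube x ⊂ W.cube (Qf x) := (hspec x hxF'.1).2.2.1
          have hQ₀Qf : W.cube Q₀ ⊆ W.cube (Qf x) := by
            rcases W.nested (Qf x) Q₀ with h | h | h
            · exact absurd h hxF'.2
            · exact h
            · exfalso
              obtain ⟨z, hz⟩ := W.cube_ne x
              exact (Set.disjoint_left.mp h (hxQf.subset hz)) ((hF x hxF.1).2 hz)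
          have hyQf : W.cube y ⊂ W.cube (Qf x) := by
            refine (((hF y hyF.1).2).trans hQ₀Qf).ssubset_of_ne ?_
            intro h
            exact hxF'.2 (h ▸ (hF y hyF.1).2)
          exact lemD x y (hFP x hxF.1) hxF.2 (hFP y hyF.1) hyF.2 hssxy hyQf
        have hextdisj : (↑Fext : Set W.ι).PairwiseDisjoint W.cube := by
          intro a ha b hb hab
          rcases W.nested a b with h | h | h
          · exact (key2 a (Finset.mem_coe.mp ha) b (Finset.mem_coe.mp hb) h hab).elim
          · exact (key2 b (Finset.mem_coe.mp hb) a (Finset.mem_coe.mp ha) h hab.symm).elim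
          · exact h
        calc ∑ P ∈ Fext, sigmaE n E (W.cube P)
            = sigmaE n E (⋃ P ∈ Fext, W.cube P) :=
              (measure_biUnion_finset hextdisj fun b _ => W.cube_meas b).symm
          _ ≤ sigmaE n E (W.cube Q₀) := by
              refine measure_mono (Set.iUnion₂_subset fun P hP => ?_)
              exact (hF P (Finset.mem_filter.mp (Finset.mem_filter.mp hP).1).1).2
      calc ∑ P ∈ F.filter (· ∈ I), sigmaE n E (W.cube P) +
            (∑ P ∈ F'.filter (fun P => W.cube (Qf P) ⊆ W.cube Q₀), sigmaE n E (W.cube P) +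
              ∑ P ∈ F'.filter (fun P => ¬ W.cube (Qf P) ⊆ W.cube Q₀), sigmaE n E (W.cube P))
          ≤ CI * sigmaE n E (W.cube Q₀) +
            ((CI + 1) * sigmaE n E (W.cube Q₀) + sigmaE n E (W.cube Q₀)) :=
            add_le_add hpartI (add_le_add hint hext)
        _ = (2 * CI + 2) * sigmaE n E (W.cube Q₀) := by ring
  -- conclude via finite subsums
  rw [ENNReal.tsum_eq_iSup_sum]
  refine iSup_le fun s => ?_
  have hsum : ∑ x ∈ s, sigmaE n E (W.cube x.1) =
      ∑ P ∈ s.image Subtype.val, sigmaE n E (W.cube P) :=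
    (Finset.sum_image (f := fun P => sigmaE n E (W.cube P)) (g := Subtype.val)
      (fun x _ y _ h => Subtype.ext h)).symm
  rw [hsum]
  have ht : ∀ P ∈ s.image Subtype.val, P ∈ princ n E W u I ∧ W.cube P ⊆ W.cube Q₀ := by
    intro P hP
    obtain ⟨x, hx, rfl⟩ := Finset.mem_image.mp hP
    exact x.2
  have hkk : ∀ P : W.ι, ∃ kP : ℕ, P ∈ s.image Subtype.val → P ∈ princFam n E W u I kP := by
    intro P
    by_cases hP : P ∈ s.image Subtype.val
    · obtain ⟨kP, hk⟩ := Set.mem_iUnion.mp (ht P hP).1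
      exact ⟨kP, fun _ => hk⟩
    · exact ⟨0, fun h => absurd h hP⟩
  choose kk hkk' using hkk
  refine key ((s.image Subtype.val).sup kk) _ fun P hP => ?_
  exact ⟨hmono (Finset.le_sup hP) (hkk' P hP), (ht P hP).2⟩
end

section
/- Discrete Carleson embedding theorem: Let μ be a locally finite doubling Borel measure on a (quasi)metric space X with μ(B(x,r)) > 0 for every x ∈ X and r > 0, and let 𝔻 be a dyadic system in X. Let f ≥ 0 be locally integrable. If 𝒜 ⊂ 𝔻 satisfies a Carleson packing condition with constant Λ ≥ 1, i.e. Σ_{Q∈𝒜,Q⊆Q₀} μ(Q) ≤ Λμ(Q₀) for every Q₀ ∈ 𝔻, then for every Q₀ ∈ 𝔻, Σ_{Q∈𝒜, Q⊆Q₀} ∫_Q f dμ ≤ Λ ∫_{Q₀} M_𝔻f dμ, where M_𝔻f(x) := sup_{Q∈𝔻, Q∋x} ⨍_Q f dμ is the dyadic maximal function. -/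
open MeasureTheory Metric Set
open scoped ENNReal NNReal

attribute [local instance] Classical.propDecidable

/-- Finite Carleson sums over a subfamily are controlled by the tsum over all subcubes. -/
lemma carleson_sub {X : Type} [MetricSpace X] [MeasurableSpace X]
    (μ : Measure X) (D : MetricDyadic X) (A : Set D.ι) (R : D.ι)
    (t : Finset D.ι) (ht : ∀ Q ∈ t, Q ∈ A ∧ D.cube Q ⊆ D.cube R) :
    ∑ Q ∈ t, μ (D.cube Q) ≤
      ∑' Q : {Q : D.ι // Q ∈ A ∧ D.cube Q ⊆ D.cube R}, μ (D.cube Q.1) := by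
  classical
  rw [← Finset.tsum_subtype]
  refine Summable.tsum_le_tsum_of_inj (fun Q => ⟨Q.1, ht Q.1 Q.2⟩) ?_ (fun _ _ => zero_le)
    (fun Q => le_rfl) ENNReal.summable ENNReal.summable
  intro Q P h
  exact Subtype.ext (Subtype.mk_eq_mk.mp h)

/-- Maximal-cube bound: finite Carleson sums are controlled by the measure of the union. -/
lemma carleson_finset {X : Type} [MetricSpace X] [MeasurableSpace X]
    (μ : Measure X) (D : MetricDyadic X) (A : Set D.ι) (Λ : ℝ) (Q₀ : D.ι)
    (hA : ∀ R : D.ι, ∑' Q : {Q : D.ι // Q ∈ A ∧ D.cube Q ⊆ D.cube R}, μ (D.cube Q.1)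
        ≤ ENNReal.ofReal Λ * μ (D.cube R))
    (s : Finset {Q : D.ι // Q ∈ A ∧ D.cube Q ⊆ D.cube Q₀}) :
    ∑ Q ∈ s, μ (D.cube Q.1) ≤ ENNReal.ofReal Λ * μ (⋃ Q ∈ s, D.cube Q.1) := by
  classical
  set S : Finset (Set X) := s.image (fun Q => D.cube Q.1) with hS
  set M : Finset (Set X) := S.filter (fun U => ∀ V ∈ S, U ⊆ V → U = V) with hM
  have hmax : ∀ U ∈ S, ∃ V ∈ M, U ⊆ V := by
    intro U hU
    obtain ⟨V, hV, hVmax⟩ :=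
      Finset.exists_maximal (s := S.filter (fun V => U ⊆ V)) ⟨U, by simp [hU]⟩
    simp only [Finset.mem_filter] at hV
    refine ⟨V, ?_, hV.2⟩
    simp only [hM, Finset.mem_filter]
    refine ⟨hV.1, fun W hW hVW => ?_⟩
    by_contra hne
    exact hne (le_antisymm hVW (hVmax (Finset.mem_filter.2 ⟨hW, hV.2.trans hVW⟩) hVW))
  have hMS : ∀ U ∈ M, ∃ R : {Q : D.ι // Q ∈ A ∧ D.cube Q ⊆ D.cube Q₀},
      R ∈ s ∧ D.cube R.1 = U := by
    intro U hU
    have : U ∈ S := (Finset.filter_subset _ _) hU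
    simpa [hS, eq_comm] using Finset.mem_image.mp this
  have hdisj : (M : Set (Set X)).PairwiseDisjoint (fun (U : Set X) => U) := by
    intro U hU V hV hne
    obtain ⟨RU, _, hRU⟩ := hMS U hU
    obtain ⟨RV, _, hRV⟩ := hMS V hV
    have hUM := (Finset.mem_filter.mp hU).2
    have hVM := (Finset.mem_filter.mp hV).2
    rcases D.nested RU.1 RV.1 with h | h | h
    · exact absurd (hUM V (Finset.filter_subset _ _ hV) (by rw [← hRU, ← hRV]; exact h)) hne
    · exact absurd (hVM U (Finset.filter_subset _ _ hU) (by rw [← hRU, ← hRV]; exact h)).symm hne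
    · show Disjoint U V
      rw [← hRU, ← hRV]; exact h
  have hmeasM : ∀ U ∈ M, MeasurableSet U := by
    intro U hU
    obtain ⟨RU, _, hRU⟩ := hMS U hU
    rw [← hRU]; exact D.cube_meas _
  have swap : ∑ Q ∈ s, ∑ U ∈ M.filter (fun U => D.cube Q.1 ⊆ U), μ (D.cube Q.1)
      = ∑ U ∈ M, ∑ Q ∈ s.filter (fun Q => D.cube Q.1 ⊆ U), μ (D.cube Q.1) := by
    simp only [Finset.sum_filter]
    rw [Finset.sum_comm]
  calc ∑ Q ∈ s, μ (D.cube Q.1)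
      ≤ ∑ Q ∈ s, ∑ U ∈ M.filter (fun U => D.cube Q.1 ⊆ U), μ (D.cube Q.1) := by
        refine Finset.sum_le_sum fun Q hQ => ?_
        obtain ⟨V, hV, hQV⟩ := hmax (D.cube Q.1) (Finset.mem_image_of_mem _ hQ)
        exact Finset.single_le_sum (f := fun _ => μ (D.cube Q.1))
          (fun _ _ => zero_le) (Finset.mem_filter.2 ⟨hV, hQV⟩)
    _ = ∑ U ∈ M, ∑ Q ∈ s.filter (fun Q => D.cube Q.1 ⊆ U), μ (D.cube Q.1) := swap
    _ ≤ ∑ U ∈ M, ENNReal.ofReal Λ * μ U := by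
        refine Finset.sum_le_sum fun U hU => ?_
        obtain ⟨R, _, hRU⟩ := hMS U hU
        have h1 : ∑ Q ∈ s.filter (fun Q => D.cube Q.1 ⊆ U), μ (D.cube Q.1)
            = ∑ Q ∈ (s.filter (fun Q => D.cube Q.1 ⊆ U)).image Subtype.val, μ (D.cube Q) := by
          rw [Finset.sum_image (fun Q _ P _ h => Subtype.ext h)]
        rw [h1, ← hRU]
        refine le_trans (carleson_sub μ D A R.1 _ ?_) (hA R.1)
        intro Q hQ
        obtain ⟨P, hP, rfl⟩ := Finset.mem_image.mp hQ
        exact ⟨P.2.1, hRU ▸ (Finset.mem_filter.mp hP).2⟩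
    _ = ENNReal.ofReal Λ * ∑ U ∈ M, μ U := by rw [← Finset.mul_sum]
    _ = ENNReal.ofReal Λ * μ (⋃ U ∈ M, U) := by
        rw [measure_biUnion_finset hdisj hmeasM]
    _ ≤ ENNReal.ofReal Λ * μ (⋃ Q ∈ s, D.cube Q.1) := by
        refine mul_le_mul_right (measure_mono ?_) _
        refine iUnion₂_subset fun U hU => ?_
        obtain ⟨R, hRs, hRU⟩ := hMS U hU
        exact hRU ▸ subset_iUnion₂ (s := fun Q (_ : Q ∈ s) => D.cube Q.1) R hRs

/-- Weighted finite Carleson embedding, by induction on the number of cubes. -/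
lemma carleson_weighted {X : Type} [MetricSpace X] [MeasurableSpace X]
    (μ : Measure X) (D : MetricDyadic X) (A : Set D.ι) (Λ : ℝ) (Q₀ : D.ι)
    (hA : ∀ R : D.ι, ∑' Q : {Q : D.ι // Q ∈ A ∧ D.cube Q ⊆ D.cube R}, μ (D.cube Q.1)
        ≤ ENNReal.ofReal Λ * μ (D.cube R)) :
    ∀ s : Finset {Q : D.ι // Q ∈ A ∧ D.cube Q ⊆ D.cube Q₀},
      ∀ b : {Q : D.ι // Q ∈ A ∧ D.cube Q ⊆ D.cube Q₀} → ℝ≥0∞,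
      ∑ Q ∈ s, μ (D.cube Q.1) * b Q ≤
        ENNReal.ofReal Λ *
          ∫⁻ x in D.cube Q₀, (⨆ Q ∈ s, (D.cube Q.1).indicator (fun _ => b Q) x) ∂μ := by
  classical
  intro s
  induction s using Finset.strongInduction with
  | _ s ih =>
    intro b
    rcases s.eq_empty_or_nonempty with rfl | hne
    · simp
    obtain ⟨Q0, hQ0, hmin⟩ := s.exists_min_image b hne
    set v := b Q0 with hv
    set s' := s.filter (fun Q => b Q ≠ v) with hs'
    have hss : s' ⊂ s := by
      refine Finset.filter_ssubset.mpr ⟨Q0, hQ0, by simp [hv]⟩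
    set U : Set X := ⋃ Q ∈ s, D.cube Q.1 with hU
    have hUmeas : MeasurableSet U := by
      refine Finset.measurableSet_biUnion s fun Q _ => D.cube_meas _
    have hsplit : ∑ Q ∈ s, μ (D.cube Q.1) * b Q
        = ∑ Q ∈ s, μ (D.cube Q.1) * v + ∑ Q ∈ s', μ (D.cube Q.1) * (b Q - v) := by
      have h1 : ∑ Q ∈ s', μ (D.cube Q.1) * (b Q - v)
          = ∑ Q ∈ s, μ (D.cube Q.1) * (b Q - v) := by
        refine Finset.sum_subset (Finset.filter_subset _ _) ?_
        intro Q hQs hQns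
        have : b Q = v := by
          by_contra hne'
          exact hQns (Finset.mem_filter.2 ⟨hQs, hne'⟩)
        simp [this]
      rw [h1, ← Finset.sum_add_distrib]
      refine Finset.sum_congr rfl fun Q hQ => ?_
      rw [← mul_add, add_tsub_cancel_of_le (hmin Q hQ)]
    -- Bound for the constant part
    have boundA : ∑ Q ∈ s, μ (D.cube Q.1) * v ≤
        ENNReal.ofReal Λ * ∫⁻ x in D.cube Q₀, U.indicator (fun _ => v) x ∂μ := by
      have hint : ∫⁻ x in D.cube Q₀, U.indicator (fun _ => v) x ∂μ = v * μ U := by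
        rw [lintegral_indicator hUmeas, setLIntegral_const,
          Measure.restrict_apply hUmeas,
          Set.inter_eq_self_of_subset_left (iUnion₂_subset fun Q _ => Q.2.2)]
      rw [hint]
      calc ∑ Q ∈ s, μ (D.cube Q.1) * v = (∑ Q ∈ s, μ (D.cube Q.1)) * v := by
            rw [Finset.sum_mul]
        _ ≤ (ENNReal.ofReal Λ * μ U) * v :=
            mul_le_mul_left (carleson_finset μ D A Λ Q₀ hA s) v
        _ = ENNReal.ofReal Λ * (v * μ U) := by ring
    -- Bound for the remainder, by induction
    have boundB := ih s' hss (fun Q => b Q - v)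
    -- Combine
    have hg1meas : Measurable (fun x => U.indicator (fun _ => v) x) :=
      measurable_const.indicator hUmeas
    have ptwise : ∀ x, U.indicator (fun _ => v) x +
        (⨆ Q ∈ s', (D.cube Q.1).indicator (fun _ => b Q - v) x)
        ≤ ⨆ Q ∈ s, (D.cube Q.1).indicator (fun _ => b Q) x := by
      intro x
      set G := ⨆ Q ∈ s, (D.cube Q.1).indicator (fun _ => b Q) x with hG
      by_cases hxU : x ∈ U
      · obtain ⟨Q₁, hQ₁, hxQ₁⟩ : ∃ Q ∈ s, x ∈ D.cube Q.1 := by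
          simpa [hU] using hxU
        have hvG : v ≤ G := by
          refine le_trans (hmin Q₁ hQ₁) ?_
          have : b Q₁ = (D.cube Q₁.1).indicator (fun _ => b Q₁) x := by
            rw [Set.indicator_of_mem hxQ₁]
          rw [this]
          exact le_iSup₂ (f := fun Q (_ : Q ∈ s) => (D.cube Q.1).indicator (fun _ => b Q) x)
            Q₁ hQ₁
        have h2 : (⨆ Q ∈ s', (D.cube Q.1).indicator (fun _ => b Q - v) x) ≤ G - v := by
          refine iSup₂_le fun Q hQ => ?_
          by_cases hx : x ∈ D.cube Q.1
          · rw [Set.indicator_of_mem hx]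
            have hbG : b Q ≤ G := by
              have : b Q = (D.cube Q.1).indicator (fun _ => b Q) x := by
                rw [Set.indicator_of_mem hx]
              rw [this]
              exact le_iSup₂ (f := fun Q (_ : Q ∈ s) => (D.cube Q.1).indicator (fun _ => b Q) x)
                Q (Finset.filter_subset _ _ hQ)
            exact tsub_le_tsub_right hbG v
          · rw [Set.indicator_of_notMem hx]; exact zero_le
        calc U.indicator (fun _ => v) x + (⨆ Q ∈ s', (D.cube Q.1).indicator (fun _ => b Q - v) x)
            = v + (⨆ Q ∈ s', (D.cube Q.1).indicator (fun _ => b Q - v) x) := by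
              rw [Set.indicator_of_mem hxU]
          _ ≤ v + (G - v) := add_le_add_right h2 v
          _ = G := add_tsub_cancel_of_le hvG
      · have h0 : U.indicator (fun _ => v) x = 0 := Set.indicator_of_notMem hxU _
        have h0' : (⨆ Q ∈ s', (D.cube Q.1).indicator (fun _ => b Q - v) x) ≤ 0 := by
          refine iSup₂_le fun Q hQ => ?_
          have hx : x ∉ D.cube Q.1 := fun hx => hxU (by
            refine Set.mem_iUnion₂.mpr ⟨Q, Finset.filter_subset _ _ hQ, hx⟩)
          rw [Set.indicator_of_notMem hx]
        rw [h0, zero_add]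
        exact le_trans h0' zero_le
    calc ∑ Q ∈ s, μ (D.cube Q.1) * b Q
        = ∑ Q ∈ s, μ (D.cube Q.1) * v + ∑ Q ∈ s', μ (D.cube Q.1) * (b Q - v) := hsplit
      _ ≤ ENNReal.ofReal Λ * ∫⁻ x in D.cube Q₀, U.indicator (fun _ => v) x ∂μ +
          ENNReal.ofReal Λ * ∫⁻ x in D.cube Q₀,
            (⨆ Q ∈ s', (D.cube Q.1).indicator (fun _ => b Q - v) x) ∂μ :=
          add_le_add boundA boundB
      _ = ENNReal.ofReal Λ * ∫⁻ x in D.cube Q₀, (U.indicator (fun _ => v) x +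
            (⨆ Q ∈ s', (D.cube Q.1).indicator (fun _ => b Q - v) x)) ∂μ := by
          rw [← mul_add, lintegral_add_left hg1meas]
      _ ≤ ENNReal.ofReal Λ *
            ∫⁻ x in D.cube Q₀, (⨆ Q ∈ s, (D.cube Q.1).indicator (fun _ => b Q) x) ∂μ :=
          mul_le_mul_right (lintegral_mono ptwise) _


/-- **Discrete Carleson embedding theorem.** Let `μ` be a locally finite
doubling Borel measure on a metric space `X` with `μ(B(x,r)) > 0` for all `x ∈ X`, `r > 0`,
and let `𝔻` be a dyadic system in `X`. Let `f ≥ 0` be locally integrable. If `𝒜 ⊆ 𝔻`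
satisfies a Carleson packing condition with constant `Λ ≥ 1`, then for every `Q₀ ∈ 𝔻`,
`Σ_{Q ∈ 𝒜, Q ⊆ Q₀} ∫_Q f dμ ≤ Λ ∫_{Q₀} M_𝔻 f dμ`. -/
theorem discrete_carleson_embedding {X : Type} [MetricSpace X] [MeasurableSpace X]
    [BorelSpace X] (μ : Measure X) (hfin : IsLocallyFiniteMeasure μ)
    (hdoub : ∃ Cd : ℝ≥0∞, Cd ≠ ⊤ ∧ ∀ (x : X) (r : ℝ), μ (ball x (2 * r)) ≤ Cd * μ (ball x r))
    (hpos : ∀ (x : X) (r : ℝ), 0 < r → 0 < μ (ball x r))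
    (D : MetricDyadic X) (f : X → ℝ) (hf0 : ∀ x, 0 ≤ f x) (hfi : LocallyIntegrable f μ)
    (A : Set D.ι) (Λ : ℝ) (hΛ : 1 ≤ Λ)
    (hA : ∀ Q₀ : D.ι,
      ∑' Q : {Q : D.ι // Q ∈ A ∧ D.cube Q ⊆ D.cube Q₀}, μ (D.cube Q.1) ≤
        ENNReal.ofReal Λ * μ (D.cube Q₀)) :
    ∀ Q₀ : D.ι,
      ∑' Q : {Q : D.ι // Q ∈ A ∧ D.cube Q ⊆ D.cube Q₀},
          ∫⁻ x in D.cube Q.1, ENNReal.ofReal (f x) ∂μ ≤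
        ENNReal.ofReal Λ * ∫⁻ x in D.cube Q₀, mDyad D μ f x ∂μ := by
  classical
  haveI := hfin
  intro Q₀
  obtain ⟨Cd, hCdtop, hCd⟩ := hdoub
  -- balls have finite measure
  have ballfin : ∀ (x : X) (r : ℝ), μ (ball x r) < ⊤ := by
    intro x r
    obtain ⟨V, hV, hVfin⟩ := μ.finiteAt_nhds x
    obtain ⟨ε, hε, hball⟩ := Metric.mem_nhds_iff.mp hV
    have grow : ∀ m : ℕ, μ (ball x ((2:ℝ)^m * ε)) < ⊤ := by
      intro m
      induction m with
      | zero => simpa using lt_of_le_of_lt (measure_mono hball) hVfin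
      | succ k hk =>
          have h2 : ((2:ℝ)^(k+1) * ε) = 2 * ((2:ℝ)^k * ε) := by ring
          rw [h2]
          calc μ (ball x (2 * ((2:ℝ)^k * ε))) ≤ Cd * μ (ball x ((2:ℝ)^k * ε)) := hCd x _
            _ < ⊤ := ENNReal.mul_lt_top hCdtop.lt_top hk
    obtain ⟨m, hm⟩ := pow_unbounded_of_one_lt (r / ε) (one_lt_two (α := ℝ))
    have hrm : r ≤ (2:ℝ)^m * ε := by
      rw [div_lt_iff₀ hε] at hm
      linarith
    exact lt_of_le_of_lt (measure_mono (ball_subset_ball hrm)) (grow m)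
  have cubefin : ∀ Q : D.ι, μ (D.cube Q) < ⊤ := fun Q =>
    lt_of_le_of_lt (measure_mono (D.sub_ball Q)) (ballfin _ _)
  have cubepos : ∀ Q : D.ι, 0 < μ (D.cube Q) := by
    intro Q
    have hr : (0:ℝ) < D.c1 * (2 : ℝ) ^ (-(D.gen Q)) :=
      mul_pos D.c1_pos (zpow_pos (by norm_num) _)
    exact lt_of_lt_of_le (hpos _ _ hr) (measure_mono (D.ball_sub Q))
  -- the average of any cube bounds the maximal function on that cube
  have key : ∀ (Q : D.ι) (x : X), x ∈ D.cube Q →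
      (μ (D.cube Q))⁻¹ * ∫⁻ y in D.cube Q, ENNReal.ofReal (f y) ∂μ ≤ mDyad D μ f x := by
    intro Q x hx
    exact le_iSup₂ (f := fun Q (_ : Q ∈ {Q : D.ι | x ∈ D.cube Q}) =>
      (μ (D.cube Q))⁻¹ * ∫⁻ y in D.cube Q, ENNReal.ofReal (f y) ∂μ) Q hx
  rw [ENNReal.tsum_eq_iSup_sum]
  refine iSup_le fun s => ?_
  set b : {Q : D.ι // Q ∈ A ∧ D.cube Q ⊆ D.cube Q₀} → ℝ≥0∞ :=
    fun Q => (μ (D.cube Q.1))⁻¹ * ∫⁻ y in D.cube Q.1, ENNReal.ofReal (f y) ∂μ with hb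
  have hFb : ∀ Q : {Q : D.ι // Q ∈ A ∧ D.cube Q ⊆ D.cube Q₀},
      ∫⁻ x in D.cube Q.1, ENNReal.ofReal (f x) ∂μ = μ (D.cube Q.1) * b Q := by
    intro Q
    rw [hb, ← mul_assoc, ENNReal.mul_inv_cancel (cubepos Q.1).ne' (cubefin Q.1).ne, one_mul]
  calc ∑ Q ∈ s, ∫⁻ x in D.cube Q.1, ENNReal.ofReal (f x) ∂μ
      = ∑ Q ∈ s, μ (D.cube Q.1) * b Q := Finset.sum_congr rfl fun Q _ => hFb Q
    _ ≤ ENNReal.ofReal Λ *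
          ∫⁻ x in D.cube Q₀, (⨆ Q ∈ s, (D.cube Q.1).indicator (fun _ => b Q) x) ∂μ :=
        carleson_weighted μ D A Λ Q₀ hA s b
    _ ≤ ENNReal.ofReal Λ * ∫⁻ x in D.cube Q₀, mDyad D μ f x ∂μ := by
        refine mul_le_mul_right (lintegral_mono fun x => ?_) _
        refine iSup₂_le fun Q _ => ?_
        by_cases hx : x ∈ D.cube Q.1
        · rw [Set.indicator_of_mem hx]
          exact key Q.1 x hx
        · rw [Set.indicator_of_notMem hx]
          exact zero_le
end
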